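/- Let d ≥ 1 and let ⟨·⟩ denote the spread ⟨z⟩ = max(1, max(|n|^{1/2}, ‖x‖)) on Z^{d+1}. Let α, β ∈ [0, d+1) with α + β > d + 2 and set γ = α + β - d - 2. Then Σ_{z ∈ Z^{d+1}} ⟨z_1 - z⟩^{-α} ⟨z_2 - z⟩^{-β} is bounded above and below by constant multiples (depending only on α, β, d) of ⟨z_1 - z_2⟩^{-γ}, uniformly in z_1, z_2 ∈ Z^{d+1}. -/

import Mathlib

/-- `η(n,x) = max(|n|^{1/2}, ‖x‖)` on `ℤ × ℤ^d`. -/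
noncomputable def eta {d : ℕ} (z : ℤ × (Fin d → ℤ)) : ℝ :=
  max (Real.sqrt |(z.1 : ℝ)|) (Real.sqrt (∑ i, ((z.2 i : ℝ)) ^ 2))

/-- The spread `⟨z⟩ = max(1, η(z))`. -/
noncomputable def spread {d : ℕ} (z : ℤ × (Fin d → ℤ)) : ℝ :=
  max 1 (eta z)



variable {d : ℕ}

lemma one_le_spread (z : ℤ × (Fin d → ℤ)) : 1 ≤ spread z := le_max_left _ _

lemma spread_pos (z : ℤ × (Fin d → ℤ)) : 0 < spread z :=
  lt_of_lt_of_le one_pos (one_le_spread z)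

lemma spread_neg (z : ℤ × (Fin d → ℤ)) : spread (-z) = spread z := by
  unfold spread eta
  simp [Prod.fst_neg, Prod.snd_neg, neg_sq]

lemma sqrt_add_le' {a b : ℝ} (ha : 0 ≤ a) (hb : 0 ≤ b) :
    Real.sqrt (a + b) ≤ Real.sqrt a + Real.sqrt b := by
  rw [show a + b = a + b from rfl]
  have h1 := Real.sq_sqrt ha
  have h2 := Real.sq_sqrt hb
  have h3 := Real.sqrt_nonneg a
  have h4 := Real.sqrt_nonneg b
  rw [Real.sqrt_le_left (by positivity)]
  nlinarith

lemma eta_fst_le (z : ℤ × (Fin d → ℤ)) : Real.sqrt |(z.1 : ℝ)| ≤ eta z := le_max_left _ _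
lemma eta_snd_le (z : ℤ × (Fin d → ℤ)) : Real.sqrt (∑ i, ((z.2 i : ℝ)) ^ 2) ≤ eta z := le_max_right _ _
lemma eta_le_spread (z : ℤ × (Fin d → ℤ)) : eta z ≤ spread z := le_max_right _ _


noncomputable def vec {d : ℕ} (x : Fin d → ℤ) : EuclideanSpace ℝ (Fin d) :=
  (WithLp.equiv 2 (∀ _ : Fin d, ℝ)).symm (fun i => (x i : ℝ))

lemma vec_norm (x : Fin d → ℤ) :
    Real.sqrt (∑ i, ((x i : ℝ)) ^ 2) = ‖vec x‖ := by
  rw [EuclideanSpace.norm_eq]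
  congr 1
  refine Finset.sum_congr rfl fun i _ => ?_
  rw [vec, WithLp.equiv_symm_apply, PiLp.toLp_apply, Real.norm_eq_abs, sq_abs]

lemma vec_add (x y : Fin d → ℤ) : vec (x + y) = vec x + vec y := by
  unfold vec
  simp only [WithLp.equiv_symm_apply, ← WithLp.toLp_add]
  congr 1
  funext i
  push_cast
  simp

lemma eta_add_le (a b : ℤ × (Fin d → ℤ)) : eta (a + b) ≤ eta a + eta b := by
  unfold eta
  apply max_le
  · calc Real.sqrt |((a + b).1 : ℝ)|
        ≤ Real.sqrt (|(a.1 : ℝ)| + |(b.1 : ℝ)|) := by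
          apply Real.sqrt_le_sqrt
          push_cast [Prod.fst_add]
          exact abs_add_le _ _
      _ ≤ Real.sqrt |(a.1 : ℝ)| + Real.sqrt |(b.1 : ℝ)| :=
          sqrt_add_le' (abs_nonneg _) (abs_nonneg _)
      _ ≤ _ := add_le_add (le_max_left _ _) (le_max_left _ _)
  · have h : Real.sqrt (∑ i, (((a + b).2 i : ℝ)) ^ 2) ≤
        Real.sqrt (∑ i, ((a.2 i : ℝ)) ^ 2) + Real.sqrt (∑ i, ((b.2 i : ℝ)) ^ 2) := by
      rw [vec_norm, vec_norm, vec_norm, show (a + b).2 = a.2 + b.2 from rfl, vec_add]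
      exact norm_add_le _ _
    exact h.trans (add_le_add (le_max_right _ _) (le_max_right _ _))

lemma spread_add_le (a b : ℤ × (Fin d → ℤ)) : spread (a + b) ≤ spread a + spread b := by
  unfold spread
  apply max_le
  · have := one_le_spread a
    have h0 := (spread_pos b).le
    unfold spread at this h0
    linarith
  · exact (eta_add_le a b).trans (add_le_add (le_max_right _ _) (le_max_right _ _))

lemma spread_triangle (z₁ z₂ z : ℤ × (Fin d → ℤ)) :
    spread (z₁ - z₂) ≤ spread (z₁ - z) + spread (z₂ - z) := by
  have h : z₁ - z₂ = (z₁ - z) + -(z₂ - z) := by ring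
  rw [h]
  exact (spread_add_le _ _).trans (by rw [spread_neg])


lemma rpow_anti {x y t : ℝ} (hx : 0 < x) (hxy : x ≤ y) (ht : 0 ≤ t) :
    y ^ (-t) ≤ x ^ (-t) := by
  have hy : 0 < y := lt_of_lt_of_le hx hxy
  rw [Real.rpow_neg hy.le, Real.rpow_neg hx.le]
  have h1 : 0 < x ^ t := Real.rpow_pos_of_pos hx t
  have h2 : x ^ t ≤ y ^ t := Real.rpow_le_rpow hx.le hxy ht
  exact inv_anti₀ h1 h2

lemma abs_fst_le {R : ℝ} (z : ℤ × (Fin d → ℤ)) (h : spread z ≤ R) :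
    |(z.1 : ℝ)| ≤ R ^ 2 := by
  have h0 : (0:ℝ) ≤ R := le_trans (by linarith [one_le_spread z]) h
  have : Real.sqrt |(z.1 : ℝ)| ≤ R :=
    le_trans (le_trans (eta_fst_le z) (eta_le_spread z)) h
  exact (Real.sqrt_le_left h0).mp this

lemma abs_snd_le {R : ℝ} (z : ℤ × (Fin d → ℤ)) (i : Fin d) (h : spread z ≤ R) :
    |(z.2 i : ℝ)| ≤ R := by
  have h1 : |(z.2 i : ℝ)| = Real.sqrt ((z.2 i : ℝ) ^ 2) := (Real.sqrt_sq_eq_abs _).symm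
  rw [h1]
  refine le_trans (le_trans (Real.sqrt_le_sqrt ?_) (eta_snd_le z))
    (le_trans (eta_le_spread z) h)
  exact Finset.single_le_sum (fun j _ => sq_nonneg ((z.2 j : ℝ))) (Finset.mem_univ i)

/-- box of lattice points -/
noncomputable def box (d : ℕ) (M N : ℤ) : Finset (ℤ × (Fin d → ℤ)) :=
  Finset.Icc (-M) M ×ˢ Fintype.piFinset fun _ => Finset.Icc (-N) N

lemma card_box (M N : ℤ) (hM : 0 ≤ M) (hN : 0 ≤ N) :
    ((box d M N).card : ℝ) = (2*(M:ℝ)+1) * (2*(N:ℝ)+1)^d := by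
  have h : ((box d M N).card : ℤ) = (2*M+1) * (2*N+1)^d := by
    rw [box, Finset.card_product, Fintype.card_piFinset, Finset.prod_const,
      Finset.card_univ, Fintype.card_fin]
    push_cast
    rw [Int.card_Icc, Int.card_Icc,
      Int.toNat_of_nonneg (by linarith : (0:ℤ) ≤ M + 1 - -M),
      Int.toNat_of_nonneg (by linarith : (0:ℤ) ≤ N + 1 - -N)]
    ring
  calc ((box d M N).card : ℝ) = (((2*M+1) * (2*N+1)^d : ℤ) : ℝ) := by exact_mod_cast h
    _ = (2*(M:ℝ)+1) * (2*(N:ℝ)+1)^d := by push_cast; ring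

lemma mem_box_of {R : ℝ} (hR : 1 ≤ R) (z : ℤ × (Fin d → ℤ)) (hz : spread z ≤ R) :
    z ∈ box d ⌊R^2⌋ ⌊R⌋ := by
  rw [box, Finset.mem_product, Fintype.mem_piFinset]
  constructor
  · rw [Finset.mem_Icc, ← abs_le]
    exact Int.le_floor.mpr (by rw [Int.cast_abs]; exact abs_fst_le z hz)
  · intro i
    rw [Finset.mem_Icc, ← abs_le]
    exact Int.le_floor.mpr (by rw [Int.cast_abs]; exact abs_snd_le z i hz)

lemma count_le {R : ℝ} (hR : 1 ≤ R) (F : Finset (ℤ × (Fin d → ℤ)))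
    (hF : ∀ z ∈ F, spread z ≤ R) :
    (F.card : ℝ) ≤ 3^(d+1) * R ^ ((d:ℝ)+2) := by
  have hR0 : (0:ℝ) < R := by linarith
  have hsub : F ⊆ box d ⌊R^2⌋ ⌊R⌋ := fun z hz => mem_box_of hR z (hF z hz)
  have hcard := Finset.card_le_card hsub
  have hM : (0:ℤ) ≤ ⌊R^2⌋ := Int.floor_nonneg.mpr (by positivity)
  have hN : (0:ℤ) ≤ ⌊R⌋ := Int.floor_nonneg.mpr (by linarith)
  have h1 : ((box d ⌊R^2⌋ ⌊R⌋).card : ℝ) = (2*((⌊R^2⌋:ℤ):ℝ)+1) * (2*((⌊R⌋:ℤ):ℝ)+1)^d :=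
    card_box _ _ hM hN
  have hfl1 : ((⌊R^2⌋:ℤ):ℝ) ≤ R^2 := Int.floor_le _
  have hfl2 : ((⌊R⌋:ℤ):ℝ) ≤ R := Int.floor_le _
  have hRsq : (1:ℝ) ≤ R^2 := by nlinarith
  have h2 : (2*((⌊R^2⌋:ℤ):ℝ)+1) ≤ 3*R^2 := by nlinarith
  have h3 : (2*((⌊R⌋:ℤ):ℝ)+1) ≤ 3*R := by nlinarith
  have h3' : (0:ℝ) ≤ 2*((⌊R⌋:ℤ):ℝ)+1 := by
    have : (0:ℝ) ≤ ((⌊R⌋:ℤ):ℝ) := by exact_mod_cast hN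
    linarith
  have h4 : (2*((⌊R⌋:ℤ):ℝ)+1)^d ≤ (3*R)^d := pow_le_pow_left₀ h3' h3 d
  have hrw : R ^ ((d:ℝ)+2) = R^2 * R^d := by
    rw [show ((d:ℝ)+2) = (((d+2:ℕ)):ℝ) by push_cast; ring, Real.rpow_natCast, pow_add]
    ring
  calc (F.card : ℝ) ≤ ((box d ⌊R^2⌋ ⌊R⌋).card : ℝ) := by exact_mod_cast hcard
    _ = (2*((⌊R^2⌋:ℤ):ℝ)+1) * (2*((⌊R⌋:ℤ):ℝ)+1)^d := h1
    _ ≤ (3*R^2) * (3*R)^d := by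
        apply mul_le_mul h2 h4 (by positivity) (by positivity)
    _ = 3^(d+1) * R ^ ((d:ℝ)+2) := by
        rw [hrw, mul_pow, pow_succ]
        ring

/-- dyadic level of a point -/
noncomputable def lvl (z : ℤ × (Fin d → ℤ)) : ℕ := Nat.log 2 ⌊spread z⌋₊

lemma floor_spread_pos (z : ℤ × (Fin d → ℤ)) : 1 ≤ ⌊spread z⌋₊ :=
  Nat.le_floor (by exact_mod_cast one_le_spread z)

lemma two_pow_lvl_le (z : ℤ × (Fin d → ℤ)) : (2:ℝ)^(lvl z) ≤ spread z := by
  have h1 : 2 ^ (lvl z) ≤ ⌊spread z⌋₊ :=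
    Nat.pow_log_le_self 2 (by have := floor_spread_pos z; omega)
  calc (2:ℝ)^(lvl z) = ((2^(lvl z) : ℕ) : ℝ) := by push_cast; ring
    _ ≤ (⌊spread z⌋₊ : ℝ) := by exact_mod_cast h1
    _ ≤ spread z := Nat.floor_le (spread_pos z).le

lemma spread_lt_two_pow (z : ℤ × (Fin d → ℤ)) : spread z < (2:ℝ)^(lvl z + 1) := by
  have h1 : ⌊spread z⌋₊ < 2 ^ (lvl z + 1) := Nat.lt_pow_succ_log_self one_lt_two _
  have h2 : spread z < (⌊spread z⌋₊ : ℝ) + 1 := Nat.lt_floor_add_one _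
  have h3 : (⌊spread z⌋₊ : ℝ) + 1 ≤ ((2 ^ (lvl z + 1) : ℕ) : ℝ) := by exact_mod_cast h1
  calc spread z < (⌊spread z⌋₊ : ℝ) + 1 := h2
    _ ≤ ((2 ^ (lvl z + 1) : ℕ) : ℝ) := h3
    _ = (2:ℝ)^(lvl z + 1) := by push_cast; ring

lemma fiber_sum_le (t : ℝ) (ht : 0 ≤ t) (j : ℕ) (F : Finset (ℤ × (Fin d → ℤ)))
    (hF : ∀ z ∈ F, lvl z = j) :
    ∑ z ∈ F, spread z ^ (-t) ≤
      (3^(d+1) * (2:ℝ) ^ ((d:ℝ)+2)) * (2:ℝ) ^ ((j:ℝ) * ((d:ℝ)+2-t)) := by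
  have hstep1 : ∑ z ∈ F, spread z ^ (-t) ≤ (F.card : ℝ) * ((2:ℝ)^j)^(-t) := by
    rw [← nsmul_eq_mul, ← Finset.sum_const]
    refine Finset.sum_le_sum fun z hz => ?_
    refine rpow_anti (by positivity) ?_ ht
    rw [← hF z hz]; exact two_pow_lvl_le z
  have hcount : (F.card : ℝ) ≤ 3^(d+1) * ((2:ℝ)^(j+1)) ^ ((d:ℝ)+2) := by
    refine count_le (one_le_pow₀ one_le_two) F fun z hz => ?_
    rw [← hF z hz]; exact (spread_lt_two_pow z).le
  have hpos : (0:ℝ) ≤ ((2:ℝ)^j)^(-t) := Real.rpow_nonneg (by positivity) _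
  have hstep2 : (F.card : ℝ) * ((2:ℝ)^j)^(-t) ≤
      (3^(d+1) * ((2:ℝ)^(j+1)) ^ ((d:ℝ)+2)) * ((2:ℝ)^j)^(-t) :=
    mul_le_mul_of_nonneg_right hcount hpos
  refine (hstep1.trans hstep2).trans (le_of_eq ?_)
  have e1 : ((2:ℝ)^(j+1)) ^ ((d:ℝ)+2) = (2:ℝ) ^ (((j:ℝ)+1) * ((d:ℝ)+2)) := by
    rw [← Real.rpow_natCast 2 (j+1), ← Real.rpow_mul (by norm_num : (0:ℝ) ≤ 2)]
    push_cast; ring_nf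
  have e2 : ((2:ℝ)^j) ^ (-t) = (2:ℝ) ^ ((j:ℝ) * (-t)) := by
    rw [← Real.rpow_natCast 2 j, ← Real.rpow_mul (by norm_num : (0:ℝ) ≤ 2)]
  rw [e1, e2, mul_assoc, ← Real.rpow_add (by norm_num : (0:ℝ) < 2), mul_assoc,
    ← Real.rpow_add (by norm_num : (0:ℝ) < 2)]
  congr 1
  ring

lemma geom_two_le {r : ℝ} (hr : 2 ≤ r) (J : ℕ) :
    ∑ j ∈ Finset.range (J+1), r^j ≤ 2 * r^J := by
  induction J with
  | zero => simp
  | succ J ih =>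
    rw [Finset.sum_range_succ]
    have h1 : (0:ℝ) ≤ r^J := by positivity
    have h2 : 2 * r^J ≤ r^(J+1) := by
      rw [pow_succ]
      nlinarith
    calc ∑ j ∈ Finset.range (J+1), r^j + r^(J+1) ≤ 2*r^J + r^(J+1) := by linarith
      _ ≤ 2 * r^(J+1) := by linarith

lemma geom_inv_le {q : ℝ} (h0 : 0 ≤ q) (h1 : q < 1) (k : ℕ) :
    ∑ i ∈ Finset.range k, q^i ≤ (1-q)⁻¹ := by
  have hne : q ≠ 1 := h1.ne
  rw [geom_sum_eq hne]
  have h2 : (0:ℝ) < 1 - q := by linarith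
  have h3 : (q^k - 1)/(q-1) = (1 - q^k) * (1-q)⁻¹ := by
    rw [div_eq_mul_inv, show q - 1 = -(1-q) by ring, show q^k - 1 = -(1-q^k) by ring, inv_neg]
    ring
  rw [h3]
  have h4 : 1 - q^k ≤ 1 := by
    have : (0:ℝ) ≤ q^k := by positivity
    linarith
  calc (1 - q^k) * (1-q)⁻¹ ≤ 1 * (1-q)⁻¹ :=
        mul_le_mul_of_nonneg_right h4 (by positivity)
    _ = (1-q)⁻¹ := one_mul _

lemma two_pow_logfloor_le {R : ℝ} (hR : 1 ≤ R) :
    (2:ℝ)^(Nat.log 2 ⌊R⌋₊) ≤ R := by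
  have hfl : 1 ≤ ⌊R⌋₊ := Nat.le_floor (by exact_mod_cast hR)
  have h1 : 2 ^ (Nat.log 2 ⌊R⌋₊) ≤ ⌊R⌋₊ := Nat.pow_log_le_self 2 (by omega)
  calc (2:ℝ)^(Nat.log 2 ⌊R⌋₊) = ((2^(Nat.log 2 ⌊R⌋₊) : ℕ):ℝ) := by push_cast; ring
    _ ≤ (⌊R⌋₊ : ℝ) := by exact_mod_cast h1
    _ ≤ R := Nat.floor_le (by linarith)

lemma lt_two_pow_logfloor {R : ℝ} (hR : 1 ≤ R) :
    R < (2:ℝ)^(Nat.log 2 ⌊R⌋₊ + 1) := by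
  have h1 : ⌊R⌋₊ < 2 ^ (Nat.log 2 ⌊R⌋₊ + 1) := Nat.lt_pow_succ_log_self one_lt_two _
  have h2 : R < (⌊R⌋₊ : ℝ) + 1 := Nat.lt_floor_add_one _
  have h3 : (⌊R⌋₊ : ℝ) + 1 ≤ ((2 ^ (Nat.log 2 ⌊R⌋₊ + 1) : ℕ):ℝ) := by exact_mod_cast h1
  calc R < (⌊R⌋₊ : ℝ) + 1 := h2
    _ ≤ ((2 ^ (Nat.log 2 ⌊R⌋₊ + 1) : ℕ):ℝ) := h3
    _ = (2:ℝ)^(Nat.log 2 ⌊R⌋₊ + 1) := by push_cast; ring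


noncomputable def CB (d : ℕ) : ℝ :=
  3^(d+1) * (2:ℝ)^((d:ℝ)+2) * 2 * (2:ℝ)^((d:ℝ)+2)

lemma CB_pos (d : ℕ) : 0 < CB d := by
  unfold CB
  positivity

lemma sum_le_of_spread_le {t R : ℝ} (ht0 : 0 ≤ t) (ht : t ≤ (d:ℝ)+1) (hR : 1 ≤ R)
    (F : Finset (ℤ × (Fin d → ℤ))) (hF : ∀ z ∈ F, spread z ≤ R) :
    ∑ z ∈ F, spread z ^ (-t) ≤ CB d * R ^ ((d:ℝ)+2-t) := by
  classical
  set J := Nat.log 2 ⌊R⌋₊ + 1 with hJ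
  have hmaps : ∀ z ∈ F, lvl z ∈ Finset.range (J+1) := by
    intro z hz
    rw [Finset.mem_range]
    have h1 : ⌊spread z⌋₊ ≤ ⌊R⌋₊ := Nat.floor_le_floor (hF z hz)
    have h2 : lvl z ≤ Nat.log 2 ⌊R⌋₊ := Nat.log_mono_right h1
    omega
  rw [← Finset.sum_fiberwise_of_maps_to hmaps]
  set K := (3:ℝ)^(d+1) * (2:ℝ)^((d:ℝ)+2) with hK
  have hKpos : 0 < K := by rw [hK]; positivity
  set r := (2:ℝ) ^ ((d:ℝ)+2-t) with hr
  have he1 : (1:ℝ) ≤ (d:ℝ)+2-t := by linarith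
  have hr2 : 2 ≤ r := by
    rw [hr]
    calc (2:ℝ) = 2 ^ (1:ℝ) := (Real.rpow_one 2).symm
      _ ≤ 2 ^ ((d:ℝ)+2-t) := Real.rpow_le_rpow_of_exponent_le one_le_two he1
  have hstep : ∀ j ∈ Finset.range (J+1),
      ∑ z ∈ F.filter (fun z => lvl z = j), spread z ^ (-t) ≤ K * r^j := by
    intro j _
    refine (fiber_sum_le t ht0 j (F.filter (fun z => lvl z = j))
      (fun z hz => (Finset.mem_filter.mp hz).2)).trans (le_of_eq ?_)
    rw [hK, hr, ← Real.rpow_natCast ((2:ℝ)^((d:ℝ)+2-t)) j,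
      ← Real.rpow_mul (by norm_num : (0:ℝ) ≤ 2), mul_comm ((d:ℝ)+2-t) (j:ℝ)]
  have hJle : (2:ℝ)^J ≤ 2*R := by
    rw [hJ, pow_succ]
    have := two_pow_logfloor_le hR
    nlinarith [pow_pos (by norm_num : (0:ℝ) < 2) (Nat.log 2 ⌊R⌋₊)]
  have hrJ : r^J = ((2:ℝ)^J) ^ ((d:ℝ)+2-t) := by
    rw [hr, ← Real.rpow_natCast ((2:ℝ)^((d:ℝ)+2-t)) J,
      ← Real.rpow_mul (by norm_num : (0:ℝ) ≤ 2), mul_comm,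
      Real.rpow_mul (by norm_num : (0:ℝ) ≤ 2), Real.rpow_natCast]
  have hbound : r^J ≤ (2:ℝ)^((d:ℝ)+2) * R^((d:ℝ)+2-t) := by
    rw [hrJ]
    calc ((2:ℝ)^J) ^ ((d:ℝ)+2-t) ≤ (2*R) ^ ((d:ℝ)+2-t) :=
          Real.rpow_le_rpow (by positivity) hJle (by linarith)
      _ = (2:ℝ)^((d:ℝ)+2-t) * R^((d:ℝ)+2-t) :=
          Real.mul_rpow (by norm_num) (by linarith)
      _ ≤ (2:ℝ)^((d:ℝ)+2) * R^((d:ℝ)+2-t) := by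
          refine mul_le_mul_of_nonneg_right
            (Real.rpow_le_rpow_of_exponent_le one_le_two (by linarith))
            (Real.rpow_nonneg (by linarith) _)
  calc (∑ j ∈ Finset.range (J+1), ∑ z ∈ F.filter (fun z => lvl z = j), spread z ^ (-t))
      ≤ ∑ j ∈ Finset.range (J+1), K * r^j := Finset.sum_le_sum hstep
    _ = K * ∑ j ∈ Finset.range (J+1), r^j := by rw [Finset.mul_sum]
    _ ≤ K * (2 * r^J) := mul_le_mul_of_nonneg_left (geom_two_le hr2 J) hKpos.le
    _ ≤ K * (2 * ((2:ℝ)^((d:ℝ)+2) * R^((d:ℝ)+2-t))) := by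
        refine mul_le_mul_of_nonneg_left ?_ hKpos.le
        linarith [hbound]
    _ = CB d * R ^ ((d:ℝ)+2-t) := by rw [hK]; unfold CB; ring

noncomputable def CA (d : ℕ) (σ : ℝ) : ℝ :=
  3^(d+1) * (2:ℝ)^((d:ℝ)+2) * ((1 - (2:ℝ)^(-σ))⁻¹ * (2:ℝ)^σ)

lemma CA_pos (d : ℕ) {σ : ℝ} (hσ : 0 < σ) : 0 < CA d σ := by
  unfold CA
  have hq1 : (2:ℝ)^(-σ) < 1 :=
    Real.rpow_lt_one_of_one_lt_of_neg one_lt_two (by linarith)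
  have : 0 < 1 - (2:ℝ)^(-σ) := by linarith
  positivity

lemma sum_le_of_le_spread {s R : ℝ} (hs : (d:ℝ)+2 < s) (hR : 1 ≤ R)
    (F : Finset (ℤ × (Fin d → ℤ))) (hF : ∀ z ∈ F, R ≤ spread z) :
    ∑ z ∈ F, spread z ^ (-s) ≤ CA d (s-(d:ℝ)-2) * R ^ (-(s-(d:ℝ)-2)) := by
  classical
  have hs0 : 0 ≤ s := by
    have : (0:ℝ) ≤ (d:ℝ) := Nat.cast_nonneg d
    linarith
  set σ := s - (d:ℝ) - 2 with hσ
  have hσ0 : (0:ℝ) < σ := by rw [hσ]; linarith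
  set q := (2:ℝ)^(-σ) with hq
  have hq0 : (0:ℝ) < q := Real.rpow_pos_of_pos two_pos _
  have hq1 : q < 1 := by
    rw [hq]; exact Real.rpow_lt_one_of_one_lt_of_neg one_lt_two (by linarith)
  have hRpos : (0:ℝ) < R := by linarith
  rcases F.eq_empty_or_nonempty with hF0 | hF0
  · rw [hF0, Finset.sum_empty]
    have := CA_pos d hσ0
    positivity
  set T := F.image lvl with hT
  have hTne : T.Nonempty := hF0.image _
  set J := T.max' hTne with hJdef
  set j₁ := Nat.log 2 ⌊R⌋₊ with hj₁
  have hmaps : ∀ z ∈ F, lvl z ∈ T := fun z hz => Finset.mem_image_of_mem _ hz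
  rw [← Finset.sum_fiberwise_of_maps_to hmaps]
  set K := (3:ℝ)^(d+1) * (2:ℝ)^((d:ℝ)+2) with hK
  have hKpos : (0:ℝ) < K := by rw [hK]; positivity
  have hstep : ∀ j ∈ T, ∑ z ∈ F.filter (fun z => lvl z = j), spread z ^ (-s) ≤ K * q^j := by
    intro j _
    refine (fiber_sum_le s hs0 j (F.filter (fun z => lvl z = j))
      (fun z hz => (Finset.mem_filter.mp hz).2)).trans (le_of_eq ?_)
    rw [hK, hq, ← Real.rpow_natCast ((2:ℝ)^(-σ)) j,
      ← Real.rpow_mul (by norm_num : (0:ℝ) ≤ 2)]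
    congr 2
    rw [hσ]; ring
  have hsub : T ⊆ Finset.Icc j₁ J := by
    intro j hjT
    rw [Finset.mem_Icc]
    refine ⟨?_, Finset.le_max' T j hjT⟩
    obtain ⟨z, hzF, hzj⟩ := Finset.mem_image.mp hjT
    have h1 : R ≤ spread z := hF z hzF
    have h2 : spread z < (2:ℝ)^(j+1) := by rw [← hzj]; exact spread_lt_two_pow z
    have h3 : (2:ℝ)^j₁ ≤ R := two_pow_logfloor_le hR
    have h4 : (2:ℝ)^j₁ < (2:ℝ)^(j+1) := lt_of_le_of_lt (h3.trans h1) h2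
    have h5 : j₁ < j + 1 := by
      exact_mod_cast (pow_lt_pow_iff_right₀ (by norm_num : (1:ℝ) < 2)).mp h4
    omega
  have hgeom : ∑ j ∈ Finset.Icc j₁ J, q^j ≤ q^j₁ * (1-q)⁻¹ := by
    rcases lt_or_ge J j₁ with h | h
    · rw [Finset.Icc_eq_empty (by omega), Finset.sum_empty]
      have h1q : (0:ℝ) < 1 - q := by linarith
      positivity
    · rw [← Finset.Ico_add_one_right_eq_Icc, Finset.sum_Ico_eq_sum_range]
      have : ∀ i, q^(j₁+i) = q^j₁ * q^i := fun i => pow_add q j₁ i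
      rw [Finset.sum_congr rfl fun i _ => this i, ← Finset.mul_sum]
      exact mul_le_mul_of_nonneg_left (geom_inv_le hq0.le hq1 _) (by positivity)
  have hqj₁ : q^j₁ ≤ (2:ℝ)^σ * R^(-σ) := by
    have e1 : q^j₁ = ((2:ℝ)^j₁)^(-σ) := by
      rw [hq, ← Real.rpow_natCast ((2:ℝ)^(-σ)) j₁,
        ← Real.rpow_mul (by norm_num : (0:ℝ) ≤ 2), mul_comm,
        Real.rpow_mul (by norm_num : (0:ℝ) ≤ 2), Real.rpow_natCast]
    have h6 : R/2 ≤ (2:ℝ)^j₁ := by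
      have := lt_two_pow_logfloor hR
      rw [pow_succ] at this
      nlinarith
    have h7 : ((2:ℝ)^j₁)^(-σ) ≤ (R/2)^(-σ) := rpow_anti (by linarith) h6 hσ0.le
    have e2 : (R/2)^(-σ) = (2:ℝ)^σ * R^(-σ) := by
      rw [Real.div_rpow (by linarith) (by norm_num : (0:ℝ) ≤ 2), div_eq_mul_inv,
        ← Real.rpow_neg (by norm_num : (0:ℝ) ≤ 2), neg_neg]
      ring
    rw [e1, ← e2]
    exact h7
  calc (∑ j ∈ T, ∑ z ∈ F.filter (fun z => lvl z = j), spread z ^ (-s))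
      ≤ ∑ j ∈ T, K * q^j := Finset.sum_le_sum hstep
    _ ≤ ∑ j ∈ Finset.Icc j₁ J, K * q^j :=
        Finset.sum_le_sum_of_subset_of_nonneg hsub (fun j _ _ => by positivity)
    _ = K * ∑ j ∈ Finset.Icc j₁ J, q^j := by rw [Finset.mul_sum]
    _ ≤ K * (q^j₁ * (1-q)⁻¹) := mul_le_mul_of_nonneg_left hgeom hKpos.le
    _ ≤ K * (((2:ℝ)^σ * R^(-σ)) * (1-q)⁻¹) := by
        have hinv : (0:ℝ) ≤ (1-q)⁻¹ := by
          have : (0:ℝ) < 1 - q := by linarith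
          positivity
        refine mul_le_mul_of_nonneg_left (mul_le_mul_of_nonneg_right hqj₁ hinv) hKpos.le
    _ = CA d σ * R ^ (-σ) := by rw [hK, hq]; unfold CA; ring


/-- Convolution estimate for spreads:
`Σ_z ⟨z₁ - z⟩^{-α} ⟨z₂ - z⟩^{-β} ≍ ⟨z₁ - z₂⟩^{-γ}` with `γ = α + β - d - 2`,
uniformly in `z₁, z₂`. -/
theorem spread_convolution_asymptotics
    (d : ℕ) (hd : 1 ≤ d) (α β : ℝ)
    (hα : 0 ≤ α) (hα' : α < d + 1) (hβ : 0 ≤ β) (hβ' : β < d + 1)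
    (hsum : (d : ℝ) + 2 < α + β) :
    ∃ c C : ℝ, 0 < c ∧ 0 < C ∧
      ∀ z₁ z₂ : ℤ × (Fin d → ℤ),
        c * (spread (z₁ - z₂)) ^ (-(α + β - (d : ℝ) - 2)) ≤
          (∑' z : ℤ × (Fin d → ℤ), (spread (z₁ - z)) ^ (-α) * (spread (z₂ - z)) ^ (-β)) ∧
        (∑' z : ℤ × (Fin d → ℤ), (spread (z₁ - z)) ^ (-α) * (spread (z₂ - z)) ^ (-β)) ≤
          C * (spread (z₁ - z₂)) ^ (-(α + β - (d : ℝ) - 2)) := by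
  classical
  set γ := α + β - (d : ℝ) - 2 with hγ
  have hγ0 : 0 < γ := by rw [hγ]; linarith
  have hd0 : (0:ℝ) < (d:ℝ) := by exact_mod_cast hd
  set c : ℝ := ((d:ℝ)^d)⁻¹ * (2:ℝ)^(-α) with hc
  have hcpos : 0 < c := by rw [hc]; positivity
  have hCA := CA_pos d hγ0
  have hCB := CB_pos d
  set CU : ℝ := (2:ℝ)^β * CB d + (2:ℝ)^α * CB d + (2:ℝ)^γ * CA d γ + (2:ℝ)^γ * CA d γ
    with hCU
  have hCUpos : 0 < CU := by rw [hCU]; positivity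
  refine ⟨c, CU, hcpos, hCUpos, fun z₁ z₂ => ?_⟩
  set m := spread (z₁ - z₂) with hm
  have hm1 : 1 ≤ m := one_le_spread _
  have hm0 : (0:ℝ) < m := by linarith
  have hmγ : (0:ℝ) ≤ m ^ (-γ) := Real.rpow_nonneg hm0.le _
  have hfnn : ∀ z : ℤ × (Fin d → ℤ),
      0 ≤ spread (z₁ - z) ^ (-α) * spread (z₂ - z) ^ (-β) := fun z =>
    mul_nonneg (Real.rpow_nonneg (spread_pos _).le _) (Real.rpow_nonneg (spread_pos _).le _)
  have hhalf : ∀ t : ℝ, (m/2)^(-t) = 2^t * m^(-t) := by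
    intro t
    rw [Real.div_rpow hm0.le (by norm_num : (0:ℝ) ≤ 2), div_eq_mul_inv,
      ← Real.rpow_neg (by norm_num : (0:ℝ) ≤ 2), neg_neg]
    ring
  -- the uniform finite-sum upper bound
  have key : ∀ F : Finset (ℤ × (Fin d → ℤ)),
      ∑ z ∈ F, spread (z₁ - z) ^ (-α) * spread (z₂ - z) ^ (-β) ≤ CU * m ^ (-γ) := by
    intro F
    have htri : ∀ z, m ≤ spread (z₁ - z) + spread (z₂ - z) := fun z => spread_triangle z₁ z₂ z
    set P1 : (ℤ × (Fin d → ℤ)) → Prop := fun z => 2 * spread (z₁ - z) ≤ m with hP1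
    set P2 : (ℤ × (Fin d → ℤ)) → Prop := fun z => 2 * spread (z₂ - z) ≤ m with hP2
    set P3 : (ℤ × (Fin d → ℤ)) → Prop := fun z => spread (z₁ - z) ≤ spread (z₂ - z) with hP3
    set g : (ℤ × (Fin d → ℤ)) → ℝ := fun z => spread (z₁ - z) ^ (-α) * spread (z₂ - z) ^ (-β)
      with hg
    set G1 := F.filter P1 with hG1
    set F' := F.filter (fun z => ¬ P1 z) with hF'
    set G2 := F'.filter P2 with hG2
    set F'' := F'.filter (fun z => ¬ P2 z) with hF''
    set G3 := F''.filter P3 with hG3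
    set G4 := F''.filter (fun z => ¬ P3 z) with hG4
    have e3 : ∑ z ∈ G3, g z + ∑ z ∈ G4, g z = ∑ z ∈ F'', g z :=
      Finset.sum_filter_add_sum_filter_not F'' P3 g
    have e2 : ∑ z ∈ G2, g z + ∑ z ∈ F'', g z = ∑ z ∈ F', g z :=
      Finset.sum_filter_add_sum_filter_not F' P2 g
    have e1 : ∑ z ∈ G1, g z + ∑ z ∈ F', g z = ∑ z ∈ F, g z :=
      Finset.sum_filter_add_sum_filter_not F P1 g
    have hsplit : ∑ z ∈ F, g z = ∑ z ∈ G1, g z + (∑ z ∈ G2, g z + (∑ z ∈ G3, g z + ∑ z ∈ G4, g z)) := by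
      linarith
    -- region 1
    have hS1 : ∑ z ∈ G1, g z ≤ 2^β * CB d * m^(-γ) := by
      have hb : ∀ z ∈ G1, g z ≤ (m/2)^(-β) * spread (z₁ - z) ^ (-α) := by
        intro z hz
        have hz1 : 2 * spread (z₁ - z) ≤ m := (Finset.mem_filter.mp hz).2
        have hbz : m/2 ≤ spread (z₂ - z) := by have := htri z; linarith
        have : spread (z₂ - z) ^ (-β) ≤ (m/2)^(-β) :=
          rpow_anti (by linarith) hbz hβ
        rw [hg]
        calc spread (z₁ - z) ^ (-α) * spread (z₂ - z) ^ (-β)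
            ≤ spread (z₁ - z) ^ (-α) * (m/2)^(-β) :=
              mul_le_mul_of_nonneg_left this (Real.rpow_nonneg (spread_pos _).le _)
          _ = (m/2)^(-β) * spread (z₁ - z) ^ (-α) := by ring
      have himg : ∑ z ∈ G1, spread (z₁ - z) ^ (-α)
          = ∑ u ∈ G1.image (fun z => z₁ - z), spread u ^ (-α) :=
        (Finset.sum_image (f := fun u => spread u ^ (-α)) (g := fun z => z₁ - z)
          (fun x _ y _ h => sub_right_injective h)).symm
      have hB : ∑ u ∈ G1.image (fun z => z₁ - z), spread u ^ (-α) ≤ CB d * m ^ ((d:ℝ)+2-α) := by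
        refine sum_le_of_spread_le hα (by linarith) hm1 _ ?_
        intro u hu
        obtain ⟨z, hz, rfl⟩ := Finset.mem_image.mp hu
        have hz1 : 2 * spread (z₁ - z) ≤ m := (Finset.mem_filter.mp hz).2
        linarith
      calc ∑ z ∈ G1, g z ≤ ∑ z ∈ G1, (m/2)^(-β) * spread (z₁ - z) ^ (-α) :=
            Finset.sum_le_sum hb
        _ = (m/2)^(-β) * ∑ z ∈ G1, spread (z₁ - z) ^ (-α) := by rw [Finset.mul_sum]
        _ ≤ (m/2)^(-β) * (CB d * m ^ ((d:ℝ)+2-α)) := by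
            refine mul_le_mul_of_nonneg_left ?_ (Real.rpow_nonneg (by linarith) _)
            rw [himg]; exact hB
        _ = 2^β * CB d * m^(-γ) := by
            rw [hhalf β, hγ, mul_assoc, mul_comm (m^(-β)) (CB d * m^((d:ℝ)+2-α)),
              mul_assoc (CB d), ← Real.rpow_add hm0]
            ring_nf
    -- region 2
    have hS2 : ∑ z ∈ G2, g z ≤ 2^α * CB d * m^(-γ) := by
      have hb : ∀ z ∈ G2, g z ≤ (m/2)^(-α) * spread (z₂ - z) ^ (-β) := by
        intro z hz
        have hz2 : 2 * spread (z₂ - z) ≤ m := (Finset.mem_filter.mp hz).2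
        have hnp1 : ¬ (2 * spread (z₁ - z) ≤ m) :=
          (Finset.mem_filter.mp (Finset.mem_filter.mp hz).1).2
        push_neg at hnp1
        have haz : m/2 ≤ spread (z₁ - z) := by linarith
        have h1 : spread (z₁ - z) ^ (-α) ≤ (m/2)^(-α) :=
          rpow_anti (by linarith) haz hα
        rw [hg]
        exact mul_le_mul_of_nonneg_right h1 (Real.rpow_nonneg (spread_pos _).le _)
      have himg : ∑ z ∈ G2, spread (z₂ - z) ^ (-β)
          = ∑ u ∈ G2.image (fun z => z₂ - z), spread u ^ (-β) :=
        (Finset.sum_image (f := fun u => spread u ^ (-β)) (g := fun z => z₂ - z)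
          (fun x _ y _ h => sub_right_injective h)).symm
      have hB : ∑ u ∈ G2.image (fun z => z₂ - z), spread u ^ (-β) ≤ CB d * m ^ ((d:ℝ)+2-β) := by
        refine sum_le_of_spread_le hβ (by linarith) hm1 _ ?_
        intro u hu
        obtain ⟨z, hz, rfl⟩ := Finset.mem_image.mp hu
        have hz2 : 2 * spread (z₂ - z) ≤ m := (Finset.mem_filter.mp hz).2
        linarith
      calc ∑ z ∈ G2, g z ≤ ∑ z ∈ G2, (m/2)^(-α) * spread (z₂ - z) ^ (-β) :=
            Finset.sum_le_sum hb
        _ = (m/2)^(-α) * ∑ z ∈ G2, spread (z₂ - z) ^ (-β) := by rw [Finset.mul_sum]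
        _ ≤ (m/2)^(-α) * (CB d * m ^ ((d:ℝ)+2-β)) := by
            refine mul_le_mul_of_nonneg_left ?_ (Real.rpow_nonneg (by linarith) _)
            rw [himg]; exact hB
        _ = 2^α * CB d * m^(-γ) := by
            rw [hhalf α, hγ, mul_assoc, mul_comm (m^(-α)) (CB d * m^((d:ℝ)+2-β)),
              mul_assoc (CB d), ← Real.rpow_add hm0]
            ring_nf
    -- common facts for regions 3 and 4
    have hCAγ : α+β-(d:ℝ)-2 = γ := by rw [hγ]
    set R0 := max 1 (m/2) with hR0
    have hR01 : (1:ℝ) ≤ R0 := le_max_left _ _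
    have hR0γ : R0 ^ (-γ) ≤ 2^γ * m^(-γ) := by
      rw [← hhalf γ]
      exact rpow_anti (by linarith) (le_max_right _ _) hγ0.le
    -- region 3
    have hS3 : ∑ z ∈ G3, g z ≤ 2^γ * CA d γ * m^(-γ) := by
      have hb : ∀ z ∈ G3, g z ≤ spread (z₁ - z) ^ (-(α+β)) := by
        intro z hz
        have hab : spread (z₁ - z) ≤ spread (z₂ - z) := (Finset.mem_filter.mp hz).2
        have h1 : spread (z₂ - z) ^ (-β) ≤ spread (z₁ - z) ^ (-β) :=
          rpow_anti (spread_pos _) hab hβ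
        rw [hg]
        calc spread (z₁ - z) ^ (-α) * spread (z₂ - z) ^ (-β)
            ≤ spread (z₁ - z) ^ (-α) * spread (z₁ - z) ^ (-β) :=
              mul_le_mul_of_nonneg_left h1 (Real.rpow_nonneg (spread_pos _).le _)
          _ = spread (z₁ - z) ^ (-(α+β)) := by
              rw [← Real.rpow_add (spread_pos _)]; congr 1; ring
      have himg : ∑ z ∈ G3, spread (z₁ - z) ^ (-(α+β))
          = ∑ u ∈ G3.image (fun z => z₁ - z), spread u ^ (-(α+β)) :=
        (Finset.sum_image (f := fun u => spread u ^ (-(α+β))) (g := fun z => z₁ - z)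
          (fun x _ y _ h => sub_right_injective h)).symm
      have hA : ∑ u ∈ G3.image (fun z => z₁ - z), spread u ^ (-(α+β))
          ≤ CA d (α+β-(d:ℝ)-2) * R0 ^ (-(α+β-(d:ℝ)-2)) := by
        refine sum_le_of_le_spread hsum hR01 _ ?_
        intro u hu
        obtain ⟨z, hz, rfl⟩ := Finset.mem_image.mp hu
        have hnp1 : ¬ (2 * spread (z₁ - z) ≤ m) :=
          (Finset.mem_filter.mp (Finset.mem_filter.mp (Finset.mem_filter.mp hz).1).1).2
        push_neg at hnp1
        exact max_le (one_le_spread _) (by linarith)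
      calc ∑ z ∈ G3, g z ≤ ∑ z ∈ G3, spread (z₁ - z) ^ (-(α+β)) := Finset.sum_le_sum hb
        _ = ∑ u ∈ G3.image (fun z => z₁ - z), spread u ^ (-(α+β)) := himg
        _ ≤ CA d (α+β-(d:ℝ)-2) * R0 ^ (-(α+β-(d:ℝ)-2)) := hA
        _ = CA d γ * R0 ^ (-γ) := by rw [hCAγ]
        _ ≤ CA d γ * (2^γ * m^(-γ)) := mul_le_mul_of_nonneg_left hR0γ hCA.le
        _ = 2^γ * CA d γ * m^(-γ) := by ring
    -- region 4
    have hS4 : ∑ z ∈ G4, g z ≤ 2^γ * CA d γ * m^(-γ) := by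
      have hb : ∀ z ∈ G4, g z ≤ spread (z₂ - z) ^ (-(α+β)) := by
        intro z hz
        have hnp3 : ¬ (spread (z₁ - z) ≤ spread (z₂ - z)) := (Finset.mem_filter.mp hz).2
        push_neg at hnp3
        have h1 : spread (z₁ - z) ^ (-α) ≤ spread (z₂ - z) ^ (-α) :=
          rpow_anti (spread_pos _) hnp3.le hα
        rw [hg]
        calc spread (z₁ - z) ^ (-α) * spread (z₂ - z) ^ (-β)
            ≤ spread (z₂ - z) ^ (-α) * spread (z₂ - z) ^ (-β) :=
              mul_le_mul_of_nonneg_right h1 (Real.rpow_nonneg (spread_pos _).le _)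
          _ = spread (z₂ - z) ^ (-(α+β)) := by
              rw [← Real.rpow_add (spread_pos _)]; congr 1; ring
      have himg : ∑ z ∈ G4, spread (z₂ - z) ^ (-(α+β))
          = ∑ u ∈ G4.image (fun z => z₂ - z), spread u ^ (-(α+β)) :=
        (Finset.sum_image (f := fun u => spread u ^ (-(α+β))) (g := fun z => z₂ - z)
          (fun x _ y _ h => sub_right_injective h)).symm
      have hA : ∑ u ∈ G4.image (fun z => z₂ - z), spread u ^ (-(α+β))
          ≤ CA d (α+β-(d:ℝ)-2) * R0 ^ (-(α+β-(d:ℝ)-2)) := by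
        refine sum_le_of_le_spread hsum hR01 _ ?_
        intro u hu
        obtain ⟨z, hz, rfl⟩ := Finset.mem_image.mp hu
        have hnp2 : ¬ (2 * spread (z₂ - z) ≤ m) :=
          (Finset.mem_filter.mp (Finset.mem_filter.mp hz).1).2
        push_neg at hnp2
        exact max_le (one_le_spread _) (by linarith)
      calc ∑ z ∈ G4, g z ≤ ∑ z ∈ G4, spread (z₂ - z) ^ (-(α+β)) := Finset.sum_le_sum hb
        _ = ∑ u ∈ G4.image (fun z => z₂ - z), spread u ^ (-(α+β)) := himg
        _ ≤ CA d (α+β-(d:ℝ)-2) * R0 ^ (-(α+β-(d:ℝ)-2)) := hA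
        _ = CA d γ * R0 ^ (-γ) := by rw [hCAγ]
        _ ≤ CA d γ * (2^γ * m^(-γ)) := mul_le_mul_of_nonneg_left hR0γ hCA.le
        _ = 2^γ * CA d γ * m^(-γ) := by ring
    have hCUe : CU * m^(-γ) =
        2^β * CB d * m^(-γ) + 2^α * CB d * m^(-γ) + 2^γ * CA d γ * m^(-γ)
          + 2^γ * CA d γ * m^(-γ) := by
      rw [hCU]; ring
    linarith [hsplit, hS1, hS2, hS3, hS4]
  -- summability
  have hsummable : Summable
      (fun z : ℤ × (Fin d → ℤ) => spread (z₁ - z) ^ (-α) * spread (z₂ - z) ^ (-β)) :=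
    summable_of_sum_le (fun z => hfnn z) key
  constructor
  · -- lower bound
    set M : ℤ := ⌊m^2⌋ with hMdef
    set N : ℤ := ⌊m/(d:ℝ)⌋ with hNdef
    have hM0 : (0:ℤ) ≤ M := Int.floor_nonneg.mpr (by positivity)
    have hN0 : (0:ℤ) ≤ N := Int.floor_nonneg.mpr (by positivity)
    have hboxspread : ∀ u ∈ box d M N, spread u ≤ m := by
      intro u hu
      rw [box, Finset.mem_product] at hu
      obtain ⟨hu1, hu2⟩ := hu
      rw [Finset.mem_Icc] at hu1
      rw [Fintype.mem_piFinset] at hu2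
      have h1 : |(u.1:ℝ)| ≤ m^2 := by
        have habs : |u.1| ≤ M := abs_le.mpr hu1
        calc |(u.1:ℝ)| = ((|u.1| : ℤ):ℝ) := Int.cast_abs.symm
          _ ≤ (M:ℝ) := by exact_mod_cast habs
          _ ≤ m^2 := Int.floor_le _
      have hsq : Real.sqrt |(u.1:ℝ)| ≤ m := by
        rw [show m = Real.sqrt (m^2) from (Real.sqrt_sq hm0.le).symm]
        exact Real.sqrt_le_sqrt h1
      have h2 : ∀ i, |(u.2 i : ℝ)| ≤ m/(d:ℝ) := by
        intro i
        have habs : |u.2 i| ≤ N := abs_le.mpr (Finset.mem_Icc.mp (hu2 i))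
        calc |(u.2 i:ℝ)| = ((|u.2 i| : ℤ):ℝ) := Int.cast_abs.symm
          _ ≤ (N:ℝ) := by exact_mod_cast habs
          _ ≤ m/(d:ℝ) := Int.floor_le _
      have hd1 : (1:ℝ) ≤ (d:ℝ) := by exact_mod_cast hd
      have h3 : ∑ i, ((u.2 i : ℝ))^2 ≤ m^2 := by
        calc ∑ i, ((u.2 i : ℝ))^2 ≤ ∑ _i : Fin d, (m/(d:ℝ))^2 := by
              refine Finset.sum_le_sum fun i _ => ?_
              have hi := h2 i
              have := abs_nonneg ((u.2 i : ℝ))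
              nlinarith [sq_abs ((u.2 i : ℝ))]
          _ = (d:ℝ) * (m/(d:ℝ))^2 := by
              rw [Finset.sum_const, Finset.card_univ, Fintype.card_fin, nsmul_eq_mul]
          _ = m^2/(d:ℝ) := by field_simp
          _ ≤ m^2 := div_le_self (by positivity) hd1
      have hsq2 : Real.sqrt (∑ i, ((u.2 i : ℝ))^2) ≤ m := by
        rw [show m = Real.sqrt (m^2) from (Real.sqrt_sq hm0.le).symm]
        exact Real.sqrt_le_sqrt h3
      have heta : eta u ≤ m := max_le hsq hsq2
      exact max_le hm1 heta
    have hterm : ∀ u ∈ box d M N, (2*m)^(-α) * m^(-β) ≤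
        spread (z₁ - (z₂ - u)) ^ (-α) * spread (z₂ - (z₂ - u)) ^ (-β) := by
      intro u hu
      have hbu : spread u ≤ m := hboxspread u hu
      have e1 : z₁ - (z₂ - u) = (z₁ - z₂) + u := by abel
      have e2 : z₂ - (z₂ - u) = u := by abel
      rw [e1, e2]
      have h1 : spread ((z₁ - z₂) + u) ≤ 2*m := by
        refine (spread_add_le _ _).trans ?_
        rw [← hm]; linarith
      have hA : (2*m)^(-α) ≤ spread ((z₁ - z₂) + u) ^ (-α) :=
        rpow_anti (spread_pos _) h1 hα
      have hB : m^(-β) ≤ spread u ^ (-β) := rpow_anti (spread_pos _) hbu hβ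
      exact mul_le_mul hA hB (Real.rpow_nonneg hm0.le _)
        (Real.rpow_nonneg (spread_pos _).le _)
    have hsum_eq : ∑ z ∈ (box d M N).image (fun u => z₂ - u),
          spread (z₁ - z) ^ (-α) * spread (z₂ - z) ^ (-β)
        = ∑ u ∈ box d M N,
          spread (z₁ - (z₂ - u)) ^ (-α) * spread (z₂ - (z₂ - u)) ^ (-β) :=
      Finset.sum_image
        (f := fun z => spread (z₁ - z) ^ (-α) * spread (z₂ - z) ^ (-β))
        (g := fun u => z₂ - u) (fun x _ y _ h => sub_right_injective h)
    have hcard : m^2 * (m/(d:ℝ))^d ≤ ((box d M N).card : ℝ) := by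
      rw [card_box M N hM0 hN0]
      have hMge : (0:ℝ) ≤ (M:ℝ) := by exact_mod_cast hM0
      have hNge : (0:ℝ) ≤ (N:ℝ) := by exact_mod_cast hN0
      have c1 : m^2 ≤ 2*(M:ℝ)+1 := by
        have := Int.lt_floor_add_one (m^2)
        rw [← hMdef] at this
        linarith
      have c2 : m/(d:ℝ) ≤ 2*(N:ℝ)+1 := by
        have := Int.lt_floor_add_one (m/(d:ℝ))
        rw [← hNdef] at this
        linarith
      exact mul_le_mul c1 (pow_le_pow_left₀ (by positivity) c2 d)
        (by positivity) (by linarith)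
    have hstep : ((box d M N).card : ℝ) * ((2*m)^(-α) * m^(-β)) ≤
        ∑ u ∈ box d M N,
          spread (z₁ - (z₂ - u)) ^ (-α) * spread (z₂ - (z₂ - u)) ^ (-β) := by
      rw [← nsmul_eq_mul]
      exact Finset.card_nsmul_le_sum _ _ _ hterm
    have heq : m^2 * (m/(d:ℝ))^d * ((2*m)^(-α) * m^(-β)) = c * m^(-γ) := by
      have e : m^(2:ℕ) * m^(d:ℕ) * (m^(-α) * m^(-β)) = m^(-γ) := by
        rw [← Real.rpow_natCast m 2, ← Real.rpow_natCast m d,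
          ← Real.rpow_add hm0, ← Real.rpow_add hm0, ← Real.rpow_add hm0, hγ]
        congr 1
        push_cast
        ring
      rw [div_pow, Real.mul_rpow (by norm_num : (0:ℝ) ≤ 2) hm0.le]
      calc m^2 * (m^d / (d:ℝ)^d) * ((2:ℝ)^(-α) * m^(-α) * m^(-β))
          = (((d:ℝ)^d)⁻¹ * (2:ℝ)^(-α)) * (m^(2:ℕ) * m^(d:ℕ) * (m^(-α) * m^(-β))) := by
            field_simp
        _ = c * m^(-γ) := by rw [e, hc]
    calc c * m^(-γ) = m^2 * (m/(d:ℝ))^d * ((2*m)^(-α) * m^(-β)) := heq.symm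
      _ ≤ ((box d M N).card : ℝ) * ((2*m)^(-α) * m^(-β)) :=
          mul_le_mul_of_nonneg_right hcard
            (mul_nonneg (Real.rpow_nonneg (by linarith) _) (Real.rpow_nonneg hm0.le _))
      _ ≤ ∑ u ∈ box d M N,
            spread (z₁ - (z₂ - u)) ^ (-α) * spread (z₂ - (z₂ - u)) ^ (-β) := hstep
      _ = ∑ z ∈ (box d M N).image (fun u => z₂ - u),
            spread (z₁ - z) ^ (-α) * spread (z₂ - z) ^ (-β) := hsum_eq.symm
      _ ≤ ∑' z : ℤ × (Fin d → ℤ), spread (z₁ - z) ^ (-α) * spread (z₂ - z) ^ (-β) :=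
          Summable.sum_le_tsum _ (fun z _ => hfnn z) hsummable
  · exact Summable.tsum_le_of_sum_le hsummable key
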